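/- Let n be a positive integer. Every triangulation X ∈ 𝒯(n) of the punctured n-gon consists of exactly n admissible arcs, i.e., X is finite with |X| = n. (Adachi, Proposition 2.4(1).) -/

import Mathlib

/-!
Combinatorial model of admissible arcs and triangulations of a regular
`n`-gon with one puncture (following Adachi, "The classification of
τ-tilting modules over Nakayama algebras").
-/

namespace Punctured

/-- Admissible arcs in a regular `n`-gon with one puncture:
an *inner arc* `inner i t` runs counterclockwise from vertex `i` to vertex
`i + t` (with `2 ≤ t ≤ n` required for admissibility); a *projective arc*
`proj j` runs from the puncture to the vertex `j`. -/
inductive Arc (n : ℕ) : Type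
  | inner (i : ZMod n) (t : ℕ) : Arc n
  | proj (j : ZMod n) : Arc n

namespace Arc

/-- The terminal point of an admissible arc. -/
def terminal {n : ℕ} : Arc n → ZMod n
  | .inner i t => i + (t : ZMod n)
  | .proj j => j

/-- Admissibility: inner arcs must have length `2 ≤ t ≤ n`. -/
def IsAdmissible {n : ℕ} : Arc n → Prop
  | .inner _ t => 2 ≤ t ∧ t ≤ n
  | .proj _ => True

/-- Compatibility (non-crossing) of two admissible arcs, defined via
lifts to `ℤ`. -/
def Compatible {n : ℕ} : Arc n → Arc n → Prop
  | .inner i t, .inner k s =>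
      ¬ ∃ x y : ℤ, (x : ZMod n) = i ∧ (y : ZMod n) = k ∧
        ((x < y ∧ y < x + (t : ℤ) ∧ x + (t : ℤ) < y + (s : ℤ)) ∨
         (y < x ∧ x < y + (s : ℤ) ∧ y + (s : ℤ) < x + (t : ℤ)))
  | .inner i t, .proj j =>
      ¬ ∃ x y : ℤ, (x : ZMod n) = i ∧ (y : ZMod n) = j ∧ x < y ∧ y < x + (t : ℤ)
  | .proj j, .inner i t =>
      ¬ ∃ x y : ℤ, (x : ZMod n) = i ∧ (y : ZMod n) = j ∧ x < y ∧ y < x + (t : ℤ)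
  | .proj _, .proj _ => True

end Arc

/-- A set of admissible arcs which is pairwise compatible. -/
def PairwiseCompatible (n : ℕ) (X : Set (Arc n)) : Prop :=
  (∀ a ∈ X, a.IsAdmissible) ∧ ∀ a ∈ X, ∀ b ∈ X, a.Compatible b

/-- A triangulation of the punctured `n`-gon: a pairwise compatible set of
admissible arcs, maximal under inclusion among such sets. -/
def IsTriangulation (n : ℕ) (X : Set (Arc n)) : Prop :=
  PairwiseCompatible n X ∧
    ∀ Y : Set (Arc n), PairwiseCompatible n Y → X ⊆ Y → Y = X

/-- `top(X)`: for each residue class `c`, the number of arcs of `X` with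
terminal point `c`. -/
noncomputable def topSeq (n : ℕ) (X : Set (Arc n)) : ZMod n → ℕ :=
  fun c => {arc ∈ X | Arc.terminal arc = c}.ncard

/-- The representative of `p` modulo `n` lying in `{1, …, n}`. -/
def resRep (n : ℕ) (p : ℤ) : ℕ := ((p - 1) % (n : ℤ)).toNat + 1

/-- `a'_p := Σ_{j=1}^{(p)_n} (a_j - 1)`, the `n`-periodic extension of the
partial-sum sequence of `a`. -/
def psum (n : ℕ) (a : ZMod n → ℕ) (p : ℤ) : ℤ :=
  ∑ j ∈ Finset.Icc 1 (resRep n p), ((a ((j : ℕ) : ZMod n) : ℤ) - 1)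

/-- `‖a'‖ := max {a'_1, …, a'_n}`. -/
noncomputable def pnorm (n : ℕ) (a : ZMod n → ℕ) : ℤ :=
  sSup ((fun i : ℕ => psum n a (i : ℤ)) '' Set.Icc 1 n)

/-- `δ_p = 1` if `a'_p = ‖a'‖` and `δ_p = 0` otherwise. -/
noncomputable def deltaInt (n : ℕ) (a : ZMod n → ℕ) (p : ℤ) : ℤ :=
  if psum n a p = pnorm n a then 1 else 0

/-- `k_s^j := max {k ∈ ℤ : k < j - 1 and a'_k = a'_{j-1} + s}`. -/
noncomputable def kmax (n : ℕ) (a : ZMod n → ℕ) (j s : ℤ) : ℤ :=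
  sSup {k : ℤ | k < j - 1 ∧ psum n a k = psum n a (j - 1) + s}

/-- `ℓ_j(a)`. -/
noncomputable def ellj (n : ℕ) (a : ZMod n → ℕ) (j : ℕ) : ℤ :=
  if (a ((j : ℕ) : ZMod n) : ℤ) - deltaInt n a (j : ℤ) = 0 then 0
  else (j : ℤ) - kmax n a (j : ℤ) ((a ((j : ℕ) : ZMod n) : ℤ) - deltaInt n a (j : ℤ))

/-! ### Auxiliary machinery for the proof of `triangulation_card` -/

section AuxProof

open Arc

/-- `AuxCovers n i t v`: vertex `v` lies strictly inside the inner arc `(i, t)`. -/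
def AuxCovers (n : ℕ) (i : ZMod n) (t : ℕ) (v : ZMod n) : Prop :=
  ∃ x y : ℤ, (x : ZMod n) = i ∧ (y : ZMod n) = v ∧ x < y ∧ y < x + (t : ℤ)

/-- `SubCov n X x t w`: there is an inner arc of `X` which is a proper
subinterval of `[x, x + t]` and strictly covers the integer point `w`. -/
def SubCov (n : ℕ) (X : Set (Arc n)) (x : ℤ) (t : ℕ) (w : ℤ) : Prop :=
  ∃ (k : ZMod n) (s : ℕ) (c : ℤ), Arc.inner k s ∈ X ∧ (c : ZMod n) = k ∧
    x ≤ c ∧ c + (s : ℤ) ≤ x + (t : ℤ) ∧ ¬(c = x ∧ c + (s : ℤ) = x + (t : ℤ)) ∧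
    c < w ∧ w < c + (s : ℤ)

lemma auxShift {n : ℕ} {x x' : ℤ} (h : (x' : ZMod n) = (x : ZMod n)) :
    ∃ m : ℤ, x' = x + n * m := by
  have h2 : x' ≡ x [ZMOD (n : ℤ)] := (ZMod.intCast_eq_intCast_iff _ _ _).mp h
  obtain ⟨m, hm⟩ := Int.ModEq.dvd h2
  exact ⟨-m, by rw [mul_neg]; linarith⟩

lemma auxCastSub {n : ℕ} (z m : ℤ) : ((z - n * m : ℤ) : ZMod n) = (z : ZMod n) := by
  push_cast; simp

/-- Normalize a covering witness to a prescribed lift of the left endpoint. -/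
lemma auxCovers_left {n : ℕ} {i v : ZMod n} {t : ℕ} {x : ℤ} (hx : (x : ZMod n) = i)
    (h : AuxCovers n i t v) : ∃ y : ℤ, (y : ZMod n) = v ∧ x < y ∧ y < x + (t : ℤ) := by
  obtain ⟨x', y', hx', hy', h1, h2⟩ := h
  obtain ⟨m, hm⟩ := auxShift (hx'.trans hx.symm)
  refine ⟨y' - n * m, ?_, by linarith, by linarith⟩
  rw [auxCastSub, hy']

/-- Normalize a covering witness to a prescribed lift of the covered vertex. -/
lemma auxCovers_right {n : ℕ} {i v : ZMod n} {t : ℕ} {w : ℤ} (hw : (w : ZMod n) = v)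
    (h : AuxCovers n i t v) : ∃ x : ℤ, (x : ZMod n) = i ∧ x < w ∧ w < x + (t : ℤ) := by
  obtain ⟨x', y', hx', hy', h1, h2⟩ := h
  obtain ⟨m, hm⟩ := auxShift (hy'.trans hw.symm)
  refine ⟨x' - n * m, ?_, by linarith, by linarith⟩
  rw [auxCastSub, hx']

lemma auxNoCross {n : ℕ} {X : Set (Arc n)}
    (hcomp : ∀ a ∈ X, ∀ b ∈ X, a.Compatible b) {i k : ZMod n} {t s : ℕ}
    (hA : Arc.inner i t ∈ X) (hB : Arc.inner k s ∈ X) {x y : ℤ}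
    (hx : (x : ZMod n) = i) (hy : (y : ZMod n) = k) :
    ¬((x < y ∧ y < x + (t : ℤ) ∧ x + (t : ℤ) < y + (s : ℤ)) ∨
      (y < x ∧ x < y + (s : ℤ) ∧ y + (s : ℤ) < x + (t : ℤ))) :=
  fun hp => hcomp _ hA _ hB ⟨x, y, hx, hy, hp⟩

lemma auxSymm {n : ℕ} {a b : Arc n} (h : a.Compatible b) : b.Compatible a := by
  cases a with
  | inner i t =>
    cases b with
    | inner k s =>
      rintro ⟨x, y, hx, hy, hp⟩
      rcases hp with ⟨h1, h2, h3⟩ | ⟨h1, h2, h3⟩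
      · exact h ⟨y, x, hy, hx, Or.inr ⟨h1, h2, h3⟩⟩
      · exact h ⟨y, x, hy, hx, Or.inl ⟨h1, h2, h3⟩⟩
    | proj j => exact h
  | proj j =>
    cases b with
    | inner k s => exact h
    | proj j' => trivial

lemma auxSelfCompat {n : ℕ} (hn : 0 < n) {i : ZMod n} {t : ℕ} (ht : t ≤ n) :
    (Arc.inner i t : Arc n).Compatible (Arc.inner i t) := by
  rintro ⟨x, y, hx, hy, hp⟩
  obtain ⟨m, hm⟩ := auxShift (hy.trans hx.symm)
  have hn' : (0 : ℤ) < n := by exact_mod_cast hn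
  have ht' : (t : ℤ) ≤ n := by exact_mod_cast ht
  rcases hp with ⟨h1, h2, -⟩ | ⟨h1, h2, h3⟩
  · have hmp : 1 ≤ m := by nlinarith
    have : (n : ℤ) ≤ n * m := by nlinarith
    linarith
  · have hmp : m ≤ -1 := by nlinarith
    have : (n : ℤ) * m ≤ -n := by nlinarith
    linarith

/-- Any arc compatible with everything in a triangulation already lies in it. -/
lemma auxAdd {n : ℕ} {X : Set (Arc n)} (hX : IsTriangulation n X) {a : Arc n}
    (hadm : a.IsAdmissible) (hc : ∀ b ∈ X, a.Compatible b) (hself : a.Compatible a) :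
    a ∈ X := by
  have hY : PairwiseCompatible n (insert a X) := by
    constructor
    · rintro b (rfl | hb)
      · exact hadm
      · exact hX.1.1 _ hb
    · rintro b (rfl | hb) c (rfl | hc')
      · exact hself
      · exact hc _ hc'
      · exact auxSymm (hc _ hb)
      · exact hX.1.2 _ hb _ hc'
  have := hX.2 _ hY (Set.subset_insert _ _)
  rw [← this]; exact Set.mem_insert _ _

/-- Inside any inner arc of a pairwise compatible set there is an integer point
not covered by a proper subarc. -/
lemma auxUncov {n : ℕ} {X : Set (Arc n)}
    (hadm : ∀ a ∈ X, a.IsAdmissible) (hcomp : ∀ a ∈ X, ∀ b ∈ X, a.Compatible b)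
    {i : ZMod n} {t : ℕ} (hA : Arc.inner i t ∈ X) (ht2 : 2 ≤ t)
    {x : ℤ} (hx : (x : ZMod n) = i) :
    ∃ w : ℤ, x < w ∧ w < x + (t : ℤ) ∧ ¬ SubCov n X x t w := by
  classical
  set S : Set ℕ := {s | ∃ (k : ZMod n) (c : ℤ), Arc.inner k s ∈ X ∧ (c : ZMod n) = k ∧
      x ≤ c ∧ c + (s : ℤ) ≤ x + (t : ℤ) ∧ ¬(c = x ∧ c + (s : ℤ) = x + (t : ℤ))} with hSdef
  by_cases hS : S.Nonempty
  · have hbdd : ∀ s ∈ S, s ≤ t := by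
      rintro s ⟨k, c, -, -, h1, h2, -⟩
      have : (s : ℤ) ≤ t := by linarith
      exact_mod_cast this
    have hbdd' : BddAbove S := ⟨t, fun s hs => hbdd s hs⟩
    have hs0 : sSup S ∈ S := Nat.sSup_mem hS hbdd'
    set s0 := sSup S with hs0def
    have hle : ∀ s ∈ S, s ≤ s0 := fun s hs => le_csSup hbdd' hs
    obtain ⟨k, c, hB, hc, hxc, hcst, hne⟩ := hs0
    have hs02 : 2 ≤ s0 := (hadm _ hB).1
    have hs02' : (2 : ℤ) ≤ (s0 : ℤ) := by exact_mod_cast hs02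
    by_cases hcx : c = x
    · subst hcx
      have hst : (s0 : ℤ) < t := by
        rcases lt_or_eq_of_le hcst with h | h
        · linarith
        · exact absurd ⟨rfl, by linarith⟩ hne
      refine ⟨c + s0, by linarith, by linarith, ?_⟩
      rintro ⟨k', s', c', hB', hc', hxc', hcst', hne', hlt1, hlt2⟩
      by_cases hcc : c' = c
      · have hs' : s' ≤ s0 := hle s' ⟨k', c', hB', hc', hxc', hcst', hne'⟩
        have : (s' : ℤ) ≤ s0 := by exact_mod_cast hs'
        rw [hcc] at hlt2
        linarith
      · have hx' : c < c' := lt_of_le_of_ne hxc' (Ne.symm hcc)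
        exact auxNoCross hcomp hB hB' hc hc' (Or.inl ⟨hx', hlt1, hlt2⟩)
    · have hxc2 : x < c := lt_of_le_of_ne hxc (Ne.symm hcx)
      refine ⟨c, hxc2, by linarith, ?_⟩
      rintro ⟨k', s', c', hB', hc', hxc', hcst', hne', hlt1, hlt2⟩
      have hs' : s' ≤ s0 := hle s' ⟨k', c', hB', hc', hxc', hcst', hne'⟩
      have hs'' : (s' : ℤ) ≤ s0 := by exact_mod_cast hs'
      exact auxNoCross hcomp hB' hB hc' hc (Or.inl ⟨hlt1, hlt2, by linarith⟩)
  · refine ⟨x + 1, by linarith, by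
      have : (2 : ℤ) ≤ t := by exact_mod_cast ht2
      linarith, ?_⟩
    rintro ⟨k, s, c, hB, hc, h1, h2, h3, -, -⟩
    exact hS ⟨s, k, c, hB, hc, h1, h2, h3⟩

/-- If `t` is the minimal length of an arc of `X` covering `v`, then a lift of `v`
inside a lift of that arc is not covered by a proper subarc. -/
lemma auxMinUncov {n : ℕ} {X : Set (Arc n)} {i v : ZMod n} {t : ℕ} {x w : ℤ}
    (hx : (x : ZMod n) = i) (hw : (w : ZMod n) = v)
    (hmin : ∀ (k : ZMod n) (s : ℕ), Arc.inner k s ∈ X → AuxCovers n k s v → t ≤ s) :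
    ¬ SubCov n X x t w := by
  rintro ⟨k, s, c, hB, hc, h1, h2, h3, h4, h5⟩
  have hts : t ≤ s := hmin k s hB ⟨c, w, hc, hw, h4, h5⟩
  have hts' : (t : ℤ) ≤ s := by exact_mod_cast hts
  have hst : (s : ℤ) ≤ t := by linarith
  exact h3 ⟨by linarith, by linarith⟩

/-- `MinP n X v a`: `a` is an inner arc of `X` covering `v` of minimal length. -/
def MinP (n : ℕ) (X : Set (Arc n)) (v : ZMod n) (a : Arc n) : Prop :=
  a ∈ X ∧ ∃ (k : ZMod n) (s : ℕ), a = Arc.inner k s ∧ AuxCovers n k s v ∧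
    ∀ (k' : ZMod n) (s' : ℕ), Arc.inner k' s' ∈ X → AuxCovers n k' s' v → s ≤ s'

open Classical in
/-- The bijection `ZMod n → X`: minimal covering arc, or else the projective arc. -/
noncomputable def fArc (n : ℕ) (X : Set (Arc n)) (v : ZMod n) : Arc n :=
  if h : ∃ a, MinP n X v a then h.choose else Arc.proj v

lemma fArc_spec1 {n : ℕ} {X : Set (Arc n)} {v : ZMod n} (h : ∃ a, MinP n X v a) :
    MinP n X v (fArc n X v) := by
  unfold fArc
  rw [dif_pos h]
  exact h.choose_spec

lemma fArc_spec2 {n : ℕ} {X : Set (Arc n)} {v : ZMod n} (h : ¬ ∃ a, MinP n X v a) :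
    fArc n X v = Arc.proj v := by
  unfold fArc
  rw [dif_neg h]

lemma auxExistsMin {n : ℕ} {X : Set (Arc n)} {v : ZMod n}
    (hcov : ∃ (k : ZMod n) (s : ℕ), Arc.inner k s ∈ X ∧ AuxCovers n k s v) :
    ∃ a, MinP n X v a := by
  classical
  set T : Set ℕ := {s | ∃ k, Arc.inner k s ∈ X ∧ AuxCovers n k s v} with hT
  have hTne : T.Nonempty := by
    obtain ⟨k, s, h1, h2⟩ := hcov
    exact ⟨s, k, h1, h2⟩
  obtain ⟨k, h1, h2⟩ := Nat.sInf_mem hTne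
  exact ⟨Arc.inner k (sInf T), h1, k, sInf T, rfl, h2,
    fun k' s' ha hc => Nat.sInf_le ⟨k', ha, hc⟩⟩

/-- Key step for injectivity: an inner arc cannot have two interior integer points
both uncovered by proper subarcs. -/
lemma auxKey {n : ℕ} {X : Set (Arc n)} (hn : 0 < n) (hX : IsTriangulation n X)
    {k : ZMod n} {s : ℕ} (hA : Arc.inner k s ∈ X) {x a b : ℤ}
    (hx : (x : ZMod n) = k) (h1 : x < a) (h2 : a < b) (h3 : b < x + (s : ℤ))
    (haU : ¬ SubCov n X x s a) (hbU : ¬ SubCov n X x s b) : False := by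
  obtain ⟨hadm, hcomp⟩ := hX.1
  have hsn : s ≤ n := (hadm _ hA).2
  have hsn' : (s : ℤ) ≤ n := by exact_mod_cast hsn
  set u : ℕ := (b - x).toNat with hudef
  have huz : (u : ℤ) = b - x := Int.toNat_of_nonneg (by linarith)
  have hu2 : 2 ≤ u := by
    have : (2 : ℤ) ≤ (u : ℤ) := by linarith
    exact_mod_cast this
  have hun : u ≤ n := by
    have : (u : ℤ) ≤ n := by linarith
    exact_mod_cast this
  have hD : (Arc.inner k u : Arc n) ∉ X := by
    intro hDX
    exact haU ⟨k, u, x, hDX, hx, le_refl x, by linarith,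
      by rintro ⟨-, hh⟩; linarith, h1, by linarith⟩
  apply hD
  apply auxAdd hX
  · exact ⟨hu2, hun⟩
  · intro c hc
    cases c with
    | proj j =>
      rintro ⟨x', y', hx', hy', hp1, hp2⟩
      obtain ⟨m, hm⟩ := auxShift (hx'.trans hx.symm)
      refine hcomp _ hA _ hc ⟨x, y' - n * m, hx, by rw [auxCastSub, hy'], by linarith, by linarith⟩
    | inner k' s' =>
      rintro ⟨x', c', hx', hc', hp⟩
      obtain ⟨m, hm⟩ := auxShift (hx'.trans hx.symm)
      have hcc : ((c' - n * m : ℤ) : ZMod n) = k' := by rw [auxCastSub, hc']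
      rcases hp with ⟨q1, q2, q3⟩ | ⟨q1, q2, q3⟩
      · have e1 : x < c' - n * m := by linarith
        have e2 : c' - n * m < b := by linarith
        have e3 : b < c' - n * m + (s' : ℤ) := by linarith
        have e4 : c' - n * m + (s' : ℤ) ≤ x + (s : ℤ) := by
          by_contra hcon
          push_neg at hcon
          exact hcomp _ hA _ hc ⟨x, c' - n * m, hx, hcc, Or.inl ⟨e1, by linarith, hcon⟩⟩
        exact hbU ⟨k', s', c' - n * m, hc, hcc, le_of_lt e1, e4,
          by rintro ⟨hh, -⟩; linarith, e2, e3⟩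
      · exact hcomp _ hA _ hc ⟨x, c' - n * m, hx, hcc,
          Or.inr ⟨by linarith, by linarith, by linarith⟩⟩
  · exact auxSelfCompat hn hun

end AuxProof

/-- **Adachi, Proposition 2.4(1).** Every triangulation of the punctured
`n`-gon consists of exactly `n` admissible arcs. -/
theorem triangulation_card (n : ℕ) (hn : 0 < n)
    (X : Set (Arc n)) (hX : IsTriangulation n X) :
    X.Finite ∧ X.ncard = n := by
  classical
  haveI : NeZero n := ⟨hn.ne'⟩
  have hadm : ∀ a ∈ X, a.IsAdmissible := hX.1.1
  have hcomp : ∀ a ∈ X, ∀ b ∈ X, a.Compatible b := hX.1.2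
  -- `fArc n X` maps into `X`
  have hmaps : ∀ v : ZMod n, fArc n X v ∈ X := by
    intro v
    by_cases h : ∃ a, MinP n X v a
    · exact (fArc_spec1 h).1
    · rw [fArc_spec2 h]
      apply auxAdd hX
      · trivial
      · intro b hb
        cases b with
        | inner k s =>
          rintro ⟨x, y, hxk, hyv, h1, h2⟩
          exact h (auxExistsMin ⟨k, s, hb, x, y, hxk, hyv, h1, h2⟩)
        | proj j => trivial
      · trivial
  -- surjectivity
  have hsurj : ∀ a ∈ X, ∃ v, fArc n X v = a := by
    intro a ha
    cases a with
    | proj j =>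
      refine ⟨j, fArc_spec2 ?_⟩
      rintro ⟨bArc, hb1, k, s, rfl, hcov, -⟩
      exact hcomp _ hb1 _ ha hcov
    | inner i t =>
      obtain ⟨ht2, htn⟩ := hadm _ ha
      obtain ⟨x, hx⟩ : ∃ x : ℤ, (x : ZMod n) = i :=
        ⟨(i.val : ℤ), by exact_mod_cast (ZMod.natCast_rightInverse i : ((i.val : ℕ) : ZMod n) = i)⟩
      obtain ⟨w, hw1, hw2, hw3⟩ := auxUncov hadm hcomp ha ht2 hx
      have hcovA : AuxCovers n i t ((w : ZMod n)) := ⟨x, w, hx, rfl, hw1, hw2⟩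
      have hex := auxExistsMin ⟨i, t, ha, hcovA⟩
      obtain ⟨hfX, k, s, heq, hcovB, hminB⟩ := fArc_spec1 hex
      refine ⟨(w : ZMod n), ?_⟩
      rw [heq] at hfX ⊢
      have hts : s ≤ t := hminB i t ha hcovA
      have hts' : (s : ℤ) ≤ t := by exact_mod_cast hts
      obtain ⟨y, hy, hy1, hy2⟩ := auxCovers_right rfl hcovB
      rcases lt_trichotomy x y with hxy | hxy | hxy
      · exfalso
        have hnc := auxNoCross hcomp ha hfX hx hy
        have h5 : y + (s : ℤ) ≤ x + (t : ℤ) := by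
          by_contra hcon
          push_neg at hcon
          exact hnc (Or.inl ⟨hxy, by linarith, hcon⟩)
        exact hw3 ⟨k, s, y, hfX, hy, le_of_lt hxy, h5,
          by rintro ⟨hh, -⟩; linarith, hy1, hy2⟩
      · have hik : i = k := by rw [← hx, hxy, hy]
        have hst : s = t := by
          by_contra hne
          have hlt : s < t := lt_of_le_of_ne hts hne
          have hlt' : (s : ℤ) < t := by exact_mod_cast hlt
          exact hw3 ⟨k, s, y, hfX, hy, le_of_eq hxy, by linarith,
            by rintro ⟨-, hh⟩; linarith, hy1, hy2⟩
        rw [hik, hst]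
      · exfalso
        have hnc := auxNoCross hcomp ha hfX hx hy
        have h5 : x + (t : ℤ) ≤ y + (s : ℤ) := by
          by_contra hcon
          push_neg at hcon
          exact hnc (Or.inr ⟨hxy, by linarith, hcon⟩)
        linarith
  -- injectivity
  have hinj : ∀ v w : ZMod n, fArc n X v = fArc n X w → v = w := by
    intro v w hfvw
    by_cases hv : ∃ a, MinP n X v a <;> by_cases hw : ∃ a, MinP n X w a
    · obtain ⟨hAX, k, s, heqv, hcovv, hminv⟩ := fArc_spec1 hv
      obtain ⟨-, k', s', heqw, hcovw, hminw⟩ := fArc_spec1 hw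
      have hee : Arc.inner k' s' = Arc.inner k s := by rw [← heqw, ← hfvw, heqv]
      injection hee with hk hs
      subst hk; subst hs
      rw [heqv] at hAX
      by_contra hvw
      obtain ⟨x, vv, hx, hvv, h1, h2⟩ := hcovv
      obtain ⟨ww, hww, h3, h4⟩ := auxCovers_left hx hcovw
      have hvU := auxMinUncov hx hvv hminv
      have hwU := auxMinUncov hx hww hminw
      rcases lt_trichotomy vv ww with h | h | h
      · exact auxKey hn hX hAX hx h1 h h4 hvU hwU
      · exact hvw (by rw [← hvv, ← hww, h])
      · exact auxKey hn hX hAX hx h3 h h2 hwU hvU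
    · exfalso
      obtain ⟨-, k, s, heqv, -, -⟩ := fArc_spec1 hv
      rw [hfvw, fArc_spec2 hw] at heqv
      cases heqv
    · exfalso
      obtain ⟨-, k, s, heqw, -, -⟩ := fArc_spec1 hw
      rw [← hfvw, fArc_spec2 hv] at heqw
      cases heqw
    · rw [fArc_spec2 hv, fArc_spec2 hw] at hfvw
      injection hfvw
  -- assemble
  have himg : fArc n X '' Set.univ = X := by
    apply Set.Subset.antisymm
    · rintro _ ⟨v, -, rfl⟩
      exact hmaps v
    · intro a ha
      obtain ⟨v, hv⟩ := hsurj a ha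
      exact ⟨v, trivial, hv⟩
  constructor
  · rw [← himg]
    exact Set.finite_univ.image _
  · rw [← himg, Set.ncard_image_of_injOn (fun v _ w _ h => hinj v w h), Set.ncard_univ,
      Nat.card_zmod]

end Punctured
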